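/- Let X be a random vector in ℝⁿ whose law is the multivariate Gaussian measure with mean x̂ ∈ ℝⁿ and positive-definite covariance Σ. Let B be a finite index set, and for each j ∈ B and m ∈ {1, 2} let N_{j,m} ∈ ℝⁿ be a nonzero vector, c_{j,m} ∈ ℝ, and δ_{j,m} ∈ (0, 1/2) with ∑_{j∈B} ∑_{m∈{1,2}} δ_{j,m} ≤ δ. If for every j ∈ B there exists m ∈ {1, 2} such that erf((N_{j,m}ᵀ x̂ − c_{j,m}) / √(2 N_{j,m}ᵀ Σ N_{j,m})) ≥ 1 − 2 δ_{j,m}, then Pr(⋂_{j∈B} ⋃_{m∈{1,2}} { N_{j,m}ᵀ X ≥ c_{j,m} }) ≥ 1 − δ. -/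

import Mathlib

open MeasureTheory ProbabilityTheory Real
open scoped RealInnerProductSpace

/-- The Gauss error function `erf z = (2/√π) ∫ t in 0..z, exp (-t²)`. -/
noncomputable def erf (z : ℝ) : ℝ :=
  (2 / Real.sqrt Real.pi) * ∫ t in (0:ℝ)..z, Real.exp (-t ^ 2)

/-- The multivariate Gaussian measure on `EuclideanSpace ℝ (Fin n)` with mean `μ` and
(positive-definite) covariance matrix `S`, given by its density
`(√((2π)ⁿ det S))⁻¹ exp (-⟪x - μ, S⁻¹ (x - μ)⟫ / 2)` with respect to Lebesgue measure. -/
noncomputable def mvGaussian {n : ℕ} (μ : EuclideanSpace ℝ (Fin n))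
    (S : Matrix (Fin n) (Fin n) ℝ) : Measure (EuclideanSpace ℝ (Fin n)) :=
  volume.withDensity fun x =>
    ENNReal.ofReal ((Real.sqrt ((2 * Real.pi) ^ n * S.det))⁻¹ *
      Real.exp (-⟪x - μ, Matrix.toEuclideanLin S⁻¹ (x - μ)⟫ / 2))


open scoped Matrix

section
open scoped MatrixOrder

noncomputable def Matrix.PosSemidef.sqrt {m : Type*} [Fintype m] [DecidableEq m]
    {A : Matrix m m ℝ} (_hA : A.PosSemidef) : Matrix m m ℝ := CFC.sqrt A

lemma Matrix.PosSemidef.sqrt_mul_self {m : Type*} [Fintype m] [DecidableEq m]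
    {A : Matrix m m ℝ} (hA : A.PosSemidef) : hA.sqrt * hA.sqrt = A :=
  CFC.sqrt_mul_sqrt_self A (Matrix.nonneg_iff_posSemidef.mpr hA)

lemma Matrix.PosSemidef.posSemidef_sqrt {m : Type*} [Fintype m] [DecidableEq m]
    {A : Matrix m m ℝ} (hA : A.PosSemidef) : hA.sqrt.PosSemidef :=
  Matrix.nonneg_iff_posSemidef.mp (CFC.sqrt_nonneg A)

end

noncomputable def phi (t : ℝ) : ℝ := (Real.sqrt (2 * Real.pi))⁻¹ * Real.exp (-t ^ 2 / 2)

lemma phi_nonneg (t : ℝ) : 0 ≤ phi t := by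
  unfold phi; positivity

lemma phi_eq (t : ℝ) : phi t = (Real.sqrt (2 * Real.pi))⁻¹ * Real.exp (-(1/2 : ℝ) * t ^ 2) := by
  unfold phi; ring_nf

lemma measurable_phi : Measurable phi := by
  unfold phi; fun_prop

lemma integrable_phi : Integrable phi := by
  have h : Integrable (fun t : ℝ => Real.exp (-(1/2 : ℝ) * t ^ 2)) :=
    integrable_exp_neg_mul_sq (by norm_num)
  have := h.const_mul (Real.sqrt (2 * Real.pi))⁻¹
  convert this using 1
  funext t; rw [phi_eq]

lemma integral_exp_half : ∫ t : ℝ, Real.exp (-(1/2 : ℝ) * t ^ 2) = Real.sqrt (2 * Real.pi) := by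
  rw [integral_gaussian]
  rw [show Real.pi / (1/2) = 2 * Real.pi by ring]

lemma integral_phi : ∫ t : ℝ, phi t = 1 := by
  simp_rw [phi_eq]
  rw [MeasureTheory.integral_const_mul, integral_exp_half,
    inv_mul_cancel₀ (by positivity)]

lemma integral_phi_Iic_zero : ∫ t in Set.Iic (0:ℝ), phi t = 1 / 2 := by
  have heven : ∀ t : ℝ, phi (-t) = phi t := by intro t; unfold phi; rw [neg_pow]; ring_nf
  have h1 : ∫ t in Set.Iic (0:ℝ), phi t = ∫ t in Set.Ioi (0:ℝ), phi t := by
    calc ∫ t in Set.Iic (0:ℝ), phi t = ∫ t in Set.Iic (0:ℝ), phi (-t) := by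
          simp_rw [heven]
      _ = ∫ t in Set.Ioi (-(0:ℝ)), phi t := integral_comp_neg_Iic 0 phi
      _ = ∫ t in Set.Ioi (0:ℝ), phi t := by norm_num
  have h2 : (∫ t in Set.Iic (0:ℝ), phi t) + ∫ t in Set.Ioi (0:ℝ), phi t = 1 := by
    rw [intervalIntegral.integral_Iic_add_Ioi integrable_phi.integrableOn integrable_phi.integrableOn,
      integral_phi]
  linarith [h1, h2]

lemma intervalIntegral_phi (a : ℝ) :
    ∫ t in (0:ℝ)..a, phi t = erf (a / Real.sqrt 2) / 2 := by
  have h2 : Real.sqrt 2 ≠ 0 := by positivity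
  have key : ∀ x : ℝ, Real.exp (-((Real.sqrt 2)⁻¹ * x) ^ 2) = Real.exp (-x ^ 2 / 2) := by
    intro x
    congr 1
    rw [mul_pow, ← Real.sqrt_inv, Real.sq_sqrt (by norm_num)]
    ring
  have hsub : ∫ t in (0:ℝ)..a, Real.exp (-t ^ 2 / 2)
      = Real.sqrt 2 * ∫ s in (0:ℝ)..(a / Real.sqrt 2), Real.exp (-s ^ 2) := by
    have := intervalIntegral.integral_comp_mul_left (a := 0) (b := a)
      (fun s => Real.exp (-s ^ 2)) (inv_ne_zero h2)
    simp_rw [key] at this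
    rw [this]
    rw [mul_zero, inv_mul_eq_div, inv_inv, smul_eq_mul]
  have hphi : ∫ t in (0:ℝ)..a, phi t
      = (Real.sqrt (2 * Real.pi))⁻¹ * ∫ t in (0:ℝ)..a, Real.exp (-t ^ 2 / 2) := by
    unfold phi
    rw [intervalIntegral.integral_const_mul]
  rw [hphi, hsub, erf]
  rw [Real.sqrt_mul (by norm_num)]
  have hπ : Real.sqrt Real.pi ≠ 0 := by positivity
  field_simp

lemma integral_phi_Iio (a : ℝ) :
    ∫ t in Set.Iio a, phi t = (1 + erf (a / Real.sqrt 2)) / 2 := by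
  have h0 : ∫ t in Set.Iio a, phi t = ∫ t in Set.Iic a, phi t :=
    setIntegral_congr_set Iio_ae_eq_Iic
  have h1 : (∫ t in Set.Iic a, phi t) - ∫ t in Set.Iic (0:ℝ), phi t
      = ∫ t in (0:ℝ)..a, phi t :=
    intervalIntegral.integral_Iic_sub_Iic integrable_phi.integrableOn integrable_phi.integrableOn
  rw [h0]
  rw [integral_phi_Iic_zero, intervalIntegral_phi] at h1
  linarith

lemma erf_neg (z : ℝ) : erf (-z) = - erf z := by
  unfold erf
  have : (fun t : ℝ => Real.exp (-t ^ 2)) = fun t : ℝ => Real.exp (-(-t) ^ 2) := by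
    funext t; rw [neg_pow]; ring_nf
  rw [show (∫ t in (0:ℝ)..(-z), Real.exp (-t ^ 2))
      = ∫ t in (0:ℝ)..(-z), Real.exp (-(-t) ^ 2) by rw [← this]]
  rw [intervalIntegral.integral_comp_neg (fun t => Real.exp (-t ^ 2))]
  rw [neg_neg, neg_zero, intervalIntegral.integral_symm]
  ring

noncomputable def stdDens {n : ℕ} (y : EuclideanSpace ℝ (Fin n)) : ℝ :=
  ((Real.sqrt (2 * Real.pi)) ^ n)⁻¹ * Real.exp (-‖y‖ ^ 2 / 2)

lemma stdDens_nonneg {n : ℕ} (y : EuclideanSpace ℝ (Fin n)) : 0 ≤ stdDens y := by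
  unfold stdDens; positivity

lemma stdDens_eq_prod {n : ℕ} (y : EuclideanSpace ℝ (Fin n)) :
    stdDens y = ∏ i, phi (y i) := by
  unfold stdDens phi
  have hnorm : ‖y‖ ^ 2 = ∑ i, (y i) ^ 2 := by
    rw [EuclideanSpace.norm_eq, Real.sq_sqrt (by positivity)]
    simp [Real.norm_eq_abs, sq_abs]
  rw [hnorm, Finset.prod_mul_distrib, Finset.prod_const]
  have : -(∑ i, (y i) ^ 2) / 2 = ∑ i, (-(y i) ^ 2 / 2) := by
    rw [← Finset.sum_div, Finset.sum_neg_distrib]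
  rw [this, Real.exp_sum, Finset.card_univ, Fintype.card_fin, inv_pow]

lemma measurable_stdDens {n : ℕ} : Measurable (stdDens (n := n)) := by
  unfold stdDens; fun_prop

lemma lintegral_stdDens_halfspace {n : ℕ} (i₀ : Fin n) (a : ℝ) :
    (∫⁻ y : EuclideanSpace ℝ (Fin n),
      ENNReal.ofReal (Set.indicator {y : EuclideanSpace ℝ (Fin n) | y i₀ < a} stdDens y))
      = ENNReal.ofReal (∫ t in Set.Iio a, phi t) := by
  classical
  set H : Fin n → ℝ → ℝ := fun i t =>
    if i = i₀ then Set.indicator (Set.Iio a) phi t else phi t with hH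
  have hHmeas : ∀ i, Measurable (H i) := by
    intro i
    by_cases hi : i = i₀ <;>
      simp only [hH, hi, if_true, if_false, reduceIte] <;>
      first
        | exact measurable_phi.indicator measurableSet_Iio
        | exact measurable_phi
  have hHnonneg : ∀ i t, 0 ≤ H i t := by
    intro i t
    by_cases hi : i = i₀ <;> simp only [hH, hi, if_true, reduceIte]
    · exact Set.indicator_nonneg (fun x _ => phi_nonneg x) t
    · exact phi_nonneg t
  have hHint : ∀ i, Integrable (H i) := by
    intro i
    by_cases hi : i = i₀ <;> simp only [hH, hi, if_true, reduceIte]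
    · exact integrable_phi.indicator measurableSet_Iio
    · exact integrable_phi
  -- pointwise identity
  have hpoint : ∀ y : EuclideanSpace ℝ (Fin n),
      Set.indicator {y : EuclideanSpace ℝ (Fin n) | y i₀ < a} stdDens y
        = ∏ i, H i (y i) := by
    intro y
    rw [Set.indicator_apply]
    by_cases hy : y i₀ < a
    · rw [if_pos (show y ∈ {y : EuclideanSpace ℝ (Fin n) | y i₀ < a} from hy),
        stdDens_eq_prod]
      refine Finset.prod_congr rfl fun i _ => ?_
      by_cases hi : i = i₀
      · subst hi
        simp only [hH, reduceIte, Set.indicator_apply, Set.mem_Iio, if_pos hy]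
      · simp [hH, hi]
    · rw [if_neg (show y ∉ {y : EuclideanSpace ℝ (Fin n) | y i₀ < a} from hy)]
      refine (Finset.prod_eq_zero (Finset.mem_univ i₀) ?_).symm
      simp only [hH, reduceIte, Set.indicator_apply, Set.mem_Iio, if_neg hy]
  simp_rw [hpoint]
  -- transport to Pi space
  have mp := EuclideanSpace.volume_preserving_symm_measurableEquiv_toLp (Fin n)
  have hmeasF : Measurable fun x : Fin n → ℝ => ENNReal.ofReal (∏ i, H i (x i)) := by
    apply ENNReal.measurable_ofReal.comp
    exact Finset.measurable_prod _ fun i _ => (hHmeas i).comp (measurable_pi_apply i)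
  have htrans : (∫⁻ y : EuclideanSpace ℝ (Fin n), ENNReal.ofReal (∏ i, H i (y i)))
      = ∫⁻ x : Fin n → ℝ, ENNReal.ofReal (∏ i, H i (x i)) := by
    rw [← mp.lintegral_comp hmeasF]
    rfl
  rw [htrans]
  have hint : Integrable (fun x : Fin n → ℝ => ∏ i, H i (x i)) :=
    Integrable.fin_nat_prod hHint
  rw [← ofReal_integral_eq_lintegral_ofReal hint
    (ae_of_all _ fun x => Finset.prod_nonneg fun i _ => hHnonneg i (x i))]
  congr 1
  rw [MeasureTheory.volume_pi, MeasureTheory.integral_fin_nat_prod_eq_prod]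
  rw [Finset.prod_eq_single i₀]
  · simp only [hH, if_true, reduceIte]
    rw [MeasureTheory.integral_indicator measurableSet_Iio]
  · intro i _ hi
    simp only [hH, hi, if_false, reduceIte]
    exact integral_phi
  · intro hmem; exact absurd (Finset.mem_univ i₀) hmem

lemma lintegral_stdDens_inner_halfspace {n : ℕ} (w : EuclideanSpace ℝ (Fin n))
    (hw : w ≠ 0) (c' : ℝ) :
    (∫⁻ u : EuclideanSpace ℝ (Fin n),
      ENNReal.ofReal (Set.indicator {u : EuclideanSpace ℝ (Fin n) | ⟪w, u⟫ < c'} stdDens u))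
      = ENNReal.ofReal (∫ t in Set.Iio (c' / ‖w‖), phi t) := by
  classical
  have hn : 0 < n := by
    rcases Nat.eq_zero_or_pos n with h0 | h
    · exfalso; subst h0; exact hw (Subsingleton.elim w 0)
    · exact h
  set i₀ : Fin n := ⟨0, hn⟩
  have hwn : 0 < ‖w‖ := norm_pos_iff.mpr hw
  -- orthonormal basis with b i₀ = ‖w‖⁻¹ • w
  set v : Fin n → EuclideanSpace ℝ (Fin n) := fun _ => ‖w‖⁻¹ • w with hv
  have hvon : Orthonormal ℝ (Set.restrict {i₀} v) := by
    constructor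
    · intro i
      change ‖‖w‖⁻¹ • w‖ = 1
      simp only [Set.restrict_apply, hv, norm_smul, norm_inv, norm_norm]
      rw [inv_mul_cancel₀ hwn.ne']
    · intro i j hij
      exact absurd (Subsingleton.elim i j) hij
  obtain ⟨b, hb⟩ := hvon.exists_orthonormalBasis_extension_of_card_eq
    (by simp [finrank_euclideanSpace_fin])
  have hbi₀ : b i₀ = ‖w‖⁻¹ • w := hb i₀ rfl
  have hw' : w = ‖w‖ • b i₀ := by
    rw [hbi₀, smul_smul, mul_inv_cancel₀ hwn.ne', one_smul]
  have hrepr : ∀ y : EuclideanSpace ℝ (Fin n), ⟪w, b.repr.symm y⟫ = ‖w‖ * y i₀ := by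
    intro y
    have h1 : ⟪w, b.repr.symm y⟫ = ⟪b.repr w, y⟫ := by
      conv_lhs => rw [show w = b.repr.symm (b.repr w) by simp]
      exact LinearIsometryEquiv.inner_map_map b.repr.symm (b.repr w) y
    have hcoef : ∀ i, b.repr w i = if i = i₀ then ‖w‖ else 0 := by
      intro i
      rw [OrthonormalBasis.repr_apply_apply]
      conv_lhs => rw [hw']
      rw [real_inner_smul_right, orthonormal_iff_ite.mp b.orthonormal i i₀]
      by_cases hi : i = i₀ <;> simp [hi]
    rw [h1, PiLp.inner_apply]
    simp only [RCLike.inner_apply, conj_trivial, hcoef, ite_mul, zero_mul]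
    simp only [mul_ite, mul_zero, Finset.sum_ite_eq', Finset.mem_univ, if_true]
    ring
  -- substitute u = b.repr.symm y
  have hsetmeas : MeasurableSet {u : EuclideanSpace ℝ (Fin n) | ⟪w, u⟫ < c'} := by
    have hcont : Continuous fun u : EuclideanSpace ℝ (Fin n) => ⟪w, u⟫ :=
      Continuous.inner continuous_const continuous_id
    exact measurableSet_lt hcont.measurable measurable_const
  have hF : Measurable fun u : EuclideanSpace ℝ (Fin n) =>
      ENNReal.ofReal (Set.indicator {u : EuclideanSpace ℝ (Fin n) | ⟪w, u⟫ < c'} stdDens u) :=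
    ENNReal.measurable_ofReal.comp (measurable_stdDens.indicator hsetmeas)
  rw [← (b.measurePreserving_repr_symm).lintegral_comp hF]
  have hpoint : ∀ y : EuclideanSpace ℝ (Fin n),
      Set.indicator {u : EuclideanSpace ℝ (Fin n) | ⟪w, u⟫ < c'} stdDens (b.repr.symm y)
        = Set.indicator {y : EuclideanSpace ℝ (Fin n) | y i₀ < c' / ‖w‖} stdDens y := by
    intro y
    have hmem : (b.repr.symm y ∈ {u : EuclideanSpace ℝ (Fin n) | ⟪w, u⟫ < c'})
        ↔ y i₀ < c' / ‖w‖ := by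
      simp only [Set.mem_setOf_eq, hrepr y]
      rw [mul_comm, ← lt_div_iff₀ hwn]
    have hnorm : stdDens (b.repr.symm y) = stdDens y := by
      unfold stdDens
      rw [LinearIsometryEquiv.norm_map]
    rw [Set.indicator_apply, Set.indicator_apply]
    by_cases hy : y i₀ < c' / ‖w‖
    · rw [if_pos (hmem.mpr hy), if_pos (show y ∈ {y : EuclideanSpace ℝ (Fin n) | y i₀ < c' / ‖w‖} from hy), hnorm]
    · rw [if_neg (fun hmm => hy (hmem.mp hmm)),
        if_neg (show y ∉ {y : EuclideanSpace ℝ (Fin n) | y i₀ < c' / ‖w‖} from hy)]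
  simp_rw [hpoint]
  exact lintegral_stdDens_halfspace i₀ (c' / ‖w‖)

lemma ofReal_indicator' {α : Type*} (s : Set α) (f : α → ℝ) (x : α) :
    ENNReal.ofReal (s.indicator f x) = s.indicator (fun x => ENNReal.ofReal (f x)) x := by
  by_cases hx : x ∈ s <;> simp [hx]

lemma toEuclideanLin_apply_coord {n : ℕ} (M : Matrix (Fin n) (Fin n) ℝ)
    (v : EuclideanSpace ℝ (Fin n)) (j : Fin n) :
    Matrix.toEuclideanLin M v j = (M *ᵥ v) j := by
  simp only [Matrix.toEuclideanLin_apply]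

lemma sqrt_pow' (x : ℝ) (hx : 0 ≤ x) (n : ℕ) :
    Real.sqrt (x ^ n) = (Real.sqrt x) ^ n := by
  conv_lhs => rw [← Real.sq_sqrt hx]
  rw [← pow_mul, mul_comm 2 n, pow_mul, Real.sqrt_sq (by positivity)]

lemma mvGaussian_apply_eq_lintegral {n : ℕ} (xhat : EuclideanSpace ℝ (Fin n))
    {S : Matrix (Fin n) (Fin n) ℝ} (hS : S.PosDef) {s : Set (EuclideanSpace ℝ (Fin n))}
    (hs : MeasurableSet s) :
    mvGaussian xhat S s
      = ∫⁻ u : EuclideanSpace ℝ (Fin n), ENNReal.ofReal (Set.indicator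
          ((fun u : EuclideanSpace ℝ (Fin n) =>
            xhat + Matrix.toEuclideanLin hS.posSemidef.sqrt u) ⁻¹' s) stdDens u) := by
  classical
  set L := hS.posSemidef.sqrt with hLdef
  have hLL : L * L = S := hS.posSemidef.sqrt_mul_self
  have hdetS : 0 < S.det := hS.det_pos
  have hdet2 : L.det * L.det = S.det := by rw [← Matrix.det_mul, hLL]
  have hdetL : L.det ≠ 0 := by
    intro h0; rw [h0, mul_zero] at hdet2; exact absurd hdet2.symm hdetS.ne'
  have hLsym : Lᵀ = L := hS.posSemidef.posSemidef_sqrt.isHermitian.eq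
  -- the linear map and its determinant
  set Lin := Matrix.toEuclideanLin L with hLin
  have hdetLin : LinearMap.det (Lin : EuclideanSpace ℝ (Fin n) →ₗ[ℝ] EuclideanSpace ℝ (Fin n)) = L.det := by
    rw [hLin, Matrix.toEuclideanLin_eq_toLin, LinearMap.det_toLin]
  have hLinCont : Continuous Lin := LinearMap.continuous_of_finiteDimensional _
  have hmap : Measure.map (⇑Lin) (volume : Measure (EuclideanSpace ℝ (Fin n)))
      = ENNReal.ofReal |L.det⁻¹| • volume := by
    rw [Measure.map_linearMap_addHaar_eq_smul_addHaar volume (by rw [hdetLin]; exact hdetL),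
      hdetLin]
  set T : EuclideanSpace ℝ (Fin n) → EuclideanSpace ℝ (Fin n) := fun u => xhat + Lin u with hT
  have hTmeas : Measurable T := (measurable_const.add hLinCont.measurable)
  set Tinv : EuclideanSpace ℝ (Fin n) → EuclideanSpace ℝ (Fin n) :=
    fun x => Matrix.toEuclideanLin L⁻¹ (x - xhat) with hTinv
  have hinvL : L⁻¹ * L = 1 := Matrix.nonsing_inv_mul L (isUnit_iff_ne_zero.mpr hdetL)
  have hLinv : L * L⁻¹ = 1 := Matrix.mul_nonsing_inv L (isUnit_iff_ne_zero.mpr hdetL)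
  have hTinvT : ∀ u, Tinv (T u) = u := by
    intro u
    simp [hT, hTinv, hLin, Matrix.toEuclideanLin_apply, Matrix.mulVec_mulVec, hinvL]
  have hTTinv : ∀ x, T (Tinv x) = x := by
    intro x
    simp [hT, hTinv, hLin, Matrix.toEuclideanLin_apply, Matrix.mulVec_mulVec, hLinv]
  -- measurability of the pulled-back integrand
  have hsetmeas : MeasurableSet (T ⁻¹' s) := hTmeas hs
  have hTinvmeas : Measurable Tinv := by
    have : Continuous Tinv := by
      rw [hTinv]
      exact (LinearMap.continuous_of_finiteDimensional _).comp (continuous_id.sub continuous_const)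
    exact this.measurable
  set g : EuclideanSpace ℝ (Fin n) → ENNReal :=
    fun x => ENNReal.ofReal (Set.indicator (T ⁻¹' s) stdDens (Tinv x)) with hg
  have hgmeas : Measurable g :=
    ENNReal.measurable_ofReal.comp ((measurable_stdDens.indicator hsetmeas).comp hTinvmeas)
  have key : (∫⁻ u, ENNReal.ofReal (Set.indicator (T ⁻¹' s) stdDens u))
      = ∫⁻ x, g x ∂(Measure.map T volume) := by
    rw [MeasureTheory.lintegral_map hgmeas hTmeas]
    congr 1; funext u; simp only [hg, hTinvT u]
  have hmapT : Measure.map T (volume : Measure (EuclideanSpace ℝ (Fin n)))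
      = ENNReal.ofReal |L.det⁻¹| • volume := by
    have : T = (fun x => xhat + x) ∘ ⇑Lin := by funext u; simp [hT]
    rw [this, ← Measure.map_map (measurable_const_add xhat) hLinCont.measurable, hmap,
      Measure.map_smul]
    congr 1
    exact (MeasureTheory.Measure.IsAddLeftInvariant.map_add_left_eq_self (μ := volume) xhat)
  rw [key, hmapT, lintegral_smul_measure]
  -- LHS as a full-space lintegral
  rw [mvGaussian, withDensity_apply _ hs]
  rw [← lintegral_indicator hs]
  rw [smul_eq_mul, ← lintegral_const_mul _ hgmeas]
  congr 1
  funext x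
  -- pointwise identity
  have habs : (0:ℝ) ≤ |L.det⁻¹| := abs_nonneg _
  rw [hg, ← ENNReal.ofReal_mul habs]
  rw [show Set.indicator s (fun x => ENNReal.ofReal ((Real.sqrt ((2 * Real.pi) ^ n * S.det))⁻¹ *
      Real.exp (-⟪x - xhat, Matrix.toEuclideanLin S⁻¹ (x - xhat)⟫ / 2))) x
      = ENNReal.ofReal (Set.indicator s (fun x => (Real.sqrt ((2 * Real.pi) ^ n * S.det))⁻¹ *
      Real.exp (-⟪x - xhat, Matrix.toEuclideanLin S⁻¹ (x - xhat)⟫ / 2)) x) from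
    (ofReal_indicator' _ _ _).symm]
  congr 1
  by_cases hx : x ∈ s
  · have hmem : Tinv x ∈ T ⁻¹' s := by
      simp only [Set.mem_preimage, hTTinv x]; exact hx
    rw [Set.indicator_of_mem hmem, Set.indicator_of_mem hx]
    -- quadratic form identity
    have hq : ‖Tinv x‖ ^ 2 = ⟪x - xhat, Matrix.toEuclideanLin S⁻¹ (x - xhat)⟫ := by
      set yv : Fin n → ℝ := fun j => (x - xhat : EuclideanSpace ℝ (Fin n)) j with hyv
      have h1 : ‖Tinv x‖ ^ 2 = (L⁻¹ *ᵥ yv) ⬝ᵥ (L⁻¹ *ᵥ yv) := by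
        rw [← real_inner_self_eq_norm_sq, PiLp.inner_apply]
        simp only [RCLike.inner_apply, conj_trivial]
        rw [dotProduct]
        refine Finset.sum_congr rfl fun j _ => ?_
        simp only [hTinv]
        rw [toEuclideanLin_apply_coord]
      have h2 : ⟪x - xhat, Matrix.toEuclideanLin S⁻¹ (x - xhat)⟫ = yv ⬝ᵥ (S⁻¹ *ᵥ yv) := by
        rw [PiLp.inner_apply]
        simp only [RCLike.inner_apply, conj_trivial]
        rw [dotProduct]
        refine Finset.sum_congr rfl fun j _ => ?_
        rw [toEuclideanLin_apply_coord, mul_comm]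
      rw [h1, h2]
      have hSinv : S⁻¹ = L⁻¹ * L⁻¹ := by rw [← hLL, Matrix.mul_inv_rev]
      rw [hSinv, ← Matrix.mulVec_mulVec, Matrix.dotProduct_mulVec yv L⁻¹]
      congr 1
      rw [show yv ᵥ* L⁻¹ = yv ᵥ* (L⁻¹)ᵀᵀ by rw [Matrix.transpose_transpose],
        Matrix.vecMul_transpose, Matrix.transpose_nonsing_inv, hLsym]
    rw [stdDens, hq]
    -- constants
    have hconst : |L.det⁻¹| * ((Real.sqrt (2 * Real.pi)) ^ n)⁻¹
        = (Real.sqrt ((2 * Real.pi) ^ n * S.det))⁻¹ := by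
      rw [Real.sqrt_mul (show (0:ℝ) ≤ (2*Real.pi)^n by positivity) S.det,
        sqrt_pow' (2*Real.pi) (by positivity) n,
        ← hdet2, show L.det * L.det = L.det ^ 2 by ring, Real.sqrt_sq_eq_abs,
        abs_inv, mul_inv]
      ring
    rw [← mul_assoc, hconst]
  · have hmem : Tinv x ∉ T ⁻¹' s := by
      simp only [Set.mem_preimage, hTTinv x]; exact hx
    rw [Set.indicator_of_notMem hmem, Set.indicator_of_notMem hx, mul_zero]

lemma mvGaussian_halfspace_le {n : ℕ} (xhat : EuclideanSpace ℝ (Fin n))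
    {S : Matrix (Fin n) (Fin n) ℝ} (hS : S.PosDef) (N₀ : EuclideanSpace ℝ (Fin n))
    (hN₀ : N₀ ≠ 0) (c₀ d₀ : ℝ)
    (hcon : erf ((⟪N₀, xhat⟫ - c₀) / Real.sqrt (2 * ⟪N₀, Matrix.toEuclideanLin S N₀⟫))
      ≥ 1 - 2 * d₀) :
    mvGaussian xhat S {x : EuclideanSpace ℝ (Fin n) | ⟪N₀, x⟫ < c₀} ≤ ENNReal.ofReal d₀ := by
  classical
  set L := hS.posSemidef.sqrt with hLdef
  have hLL : L * L = S := hS.posSemidef.sqrt_mul_self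
  have hdetS : 0 < S.det := hS.det_pos
  have hdet2 : L.det * L.det = S.det := by rw [← Matrix.det_mul, hLL]
  have hdetL : L.det ≠ 0 := by
    intro h0; rw [h0, mul_zero] at hdet2; exact absurd hdet2.symm hdetS.ne'
  have hLsym : Lᵀ = L := hS.posSemidef.posSemidef_sqrt.isHermitian.eq
  have hinvL : L⁻¹ * L = 1 := Matrix.nonsing_inv_mul L (isUnit_iff_ne_zero.mpr hdetL)
  set w : EuclideanSpace ℝ (Fin n) := Matrix.toEuclideanLin L N₀ with hwdef
  have hwcoord : ∀ j, w j = (L *ᵥ N₀) j := fun j => toEuclideanLin_apply_coord L N₀ j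
  have hw : w ≠ 0 := by
    intro h0
    have hw0 : (L *ᵥ N₀) = (0 : Fin n → ℝ) := by
      funext k; rw [← hwcoord k, h0]; rfl
    have h1 : L⁻¹ *ᵥ (L *ᵥ N₀) = (0 : Fin n → ℝ) := by rw [hw0, Matrix.mulVec_zero]
    rw [Matrix.mulVec_mulVec, hinvL, Matrix.one_mulVec] at h1
    exact hN₀ (by ext k; exact congrFun h1 k)
  have hwn : 0 < ‖w‖ := norm_pos_iff.mpr hw
  have hsmeas : MeasurableSet {x : EuclideanSpace ℝ (Fin n) | ⟪N₀, x⟫ < c₀} := by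
    have hcont : Continuous fun x : EuclideanSpace ℝ (Fin n) => ⟪N₀, x⟫ :=
      Continuous.inner continuous_const continuous_id
    exact measurableSet_lt hcont.measurable measurable_const
  rw [mvGaussian_apply_eq_lintegral xhat hS hsmeas]
  -- identify the preimage
  have hinner : ∀ u : EuclideanSpace ℝ (Fin n),
      ⟪N₀, Matrix.toEuclideanLin L u⟫ = ⟪w, u⟫ := by
    intro u
    rw [PiLp.inner_apply, PiLp.inner_apply]
    simp only [RCLike.inner_apply, conj_trivial]
    have h1 : ∑ j, Matrix.toEuclideanLin L u j * N₀ j = N₀ ⬝ᵥ (L *ᵥ u) := by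
      rw [dotProduct]
      exact Finset.sum_congr rfl fun j _ => by rw [toEuclideanLin_apply_coord, mul_comm]
    have h2 : ∑ j, u j * w j = (L *ᵥ N₀) ⬝ᵥ u := by
      rw [dotProduct]
      exact Finset.sum_congr rfl fun j _ => by rw [hwcoord, mul_comm]
    rw [h1, h2, Matrix.dotProduct_mulVec]
    congr 1
    rw [show N₀ ᵥ* L = N₀ ᵥ* Lᵀᵀ by rw [Matrix.transpose_transpose], Matrix.vecMul_transpose,
      hLsym]
  have hpre : ((fun u : EuclideanSpace ℝ (Fin n) =>
        xhat + Matrix.toEuclideanLin hS.posSemidef.sqrt u) ⁻¹'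
        {x : EuclideanSpace ℝ (Fin n) | ⟪N₀, x⟫ < c₀})
      = {u : EuclideanSpace ℝ (Fin n) | ⟪w, u⟫ < c₀ - ⟪N₀, xhat⟫} := by
    ext u
    simp only [Set.mem_preimage, Set.mem_setOf_eq, inner_add_right, ← hLdef, hinner u]
    constructor <;> intro hh <;> linarith
  rw [hpre, lintegral_stdDens_inner_halfspace w hw _]
  -- now the real bound
  rw [integral_phi_Iio]
  -- identify the variance
  have hvar : ⟪N₀, Matrix.toEuclideanLin S N₀⟫ = ‖w‖ ^ 2 := by
    have h1 : ⟪N₀, Matrix.toEuclideanLin S N₀⟫ = N₀ ⬝ᵥ (S *ᵥ N₀) := by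
      rw [PiLp.inner_apply]
      simp only [RCLike.inner_apply, conj_trivial]
      rw [dotProduct]
      exact Finset.sum_congr rfl fun j _ => by rw [toEuclideanLin_apply_coord, mul_comm]
    have h2 : ‖w‖ ^ 2 = (L *ᵥ N₀) ⬝ᵥ (L *ᵥ N₀) := by
      rw [← real_inner_self_eq_norm_sq, PiLp.inner_apply]
      simp only [RCLike.inner_apply, conj_trivial]
      rw [dotProduct]
      exact Finset.sum_congr rfl fun j _ => by rw [hwcoord]
    rw [h1, h2, ← hLL, ← Matrix.mulVec_mulVec, Matrix.dotProduct_mulVec]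
    congr 1
    rw [show N₀ ᵥ* L = N₀ ᵥ* Lᵀᵀ by rw [Matrix.transpose_transpose], Matrix.vecMul_transpose,
      hLsym]
  have hsqrt : Real.sqrt (2 * ⟪N₀, Matrix.toEuclideanLin S N₀⟫) = Real.sqrt 2 * ‖w‖ := by
    rw [hvar, Real.sqrt_mul (by norm_num), Real.sqrt_sq (norm_nonneg w)]
  have harg : (c₀ - ⟪N₀, xhat⟫) / ‖w‖ / Real.sqrt 2
      = -((⟪N₀, xhat⟫ - c₀) / Real.sqrt (2 * ⟪N₀, Matrix.toEuclideanLin S N₀⟫)) := by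
    rw [hsqrt, div_div, show c₀ - ⟪N₀, xhat⟫ = -(⟪N₀, xhat⟫ - c₀) by ring, neg_div,
      mul_comm (‖w‖) (Real.sqrt 2)]
  rw [harg, erf_neg]
  apply ENNReal.ofReal_le_ofReal
  have := hcon
  linarith

/-- **Theorem 1**: for a Gaussian random vector `X` with mean `x̂` and positive-definite
covariance `Σ`, satisfaction of the deterministic disjunctive constraints
`erf ((N_{j,m}ᵀ x̂ - c_{j,m})/√(2 N_{j,m}ᵀ Σ N_{j,m})) ≥ 1 - 2 δ_{j,m}` for at least one
`m ∈ {1,2}` per `j ∈ B`, together with the risk allocation `∑_{j,m} δ_{j,m} ≤ δ`, implies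
the joint chance constraint `Pr(⋂_j ⋃_m {N_{j,m}ᵀ X ≥ c_{j,m}}) ≥ 1 - δ`. -/
theorem stmt5 {n : ℕ} {Ω ι : Type*} [MeasurableSpace Ω] (P : Measure Ω)
    [IsProbabilityMeasure P] (X : Ω → EuclideanSpace ℝ (Fin n)) (hX : Measurable X)
    (xhat : EuclideanSpace ℝ (Fin n)) (S : Matrix (Fin n) (Fin n) ℝ) (hS : S.PosDef)
    (hlaw : P.map X = mvGaussian xhat S)
    (B : Finset ι) (N : ι → Fin 2 → EuclideanSpace ℝ (Fin n)) (hN : ∀ j m, N j m ≠ 0)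
    (c : ι → Fin 2 → ℝ) (δ : ℝ) (d : ι → Fin 2 → ℝ)
    (hd : ∀ j m, d j m ∈ Set.Ioo (0:ℝ) (1/2))
    (hsum : ∑ j ∈ B, ∑ m : Fin 2, d j m ≤ δ)
    (h : ∀ j ∈ B, ∃ m : Fin 2,
      erf ((⟪N j m, xhat⟫ - c j m) /
          Real.sqrt (2 * ⟪N j m, Matrix.toEuclideanLin S (N j m)⟫)) ≥ 1 - 2 * d j m) :
    P (⋂ j ∈ B, ⋃ m : Fin 2, {ω | ⟪N j m, X ω⟫ ≥ c j m}) ≥ ENNReal.ofReal (1 - δ) := by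
  classical
  have hδ0 : 0 ≤ δ := le_trans (Finset.sum_nonneg fun j _ =>
    Finset.sum_nonneg fun m _ => (hd j m).1.le) hsum
  -- measurability
  have hsetmeas : ∀ (j : ι) (m : Fin 2), MeasurableSet {ω | ⟪N j m, X ω⟫ ≥ c j m} := by
    intro j m
    have hcont : Continuous fun x : EuclideanSpace ℝ (Fin n) => ⟪N j m, x⟫ :=
      Continuous.inner continuous_const continuous_id
    exact measurableSet_le measurable_const (hcont.measurable.comp hX)
  set A : ι → Set Ω := fun j => ⋃ m : Fin 2, {ω | ⟪N j m, X ω⟫ ≥ c j m} with hA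
  have hAmeas : ∀ j, MeasurableSet (A j) := fun j =>
    MeasurableSet.iUnion fun m => hsetmeas j m
  have hImeas : MeasurableSet (⋂ j ∈ B, A j) :=
    MeasurableSet.biInter B.countable_toSet fun j _ => hAmeas j
  -- choose constraints
  set mj : ι → Fin 2 := fun j => if hj : j ∈ B then (h j hj).choose else 0 with hmj
  have hbound : ∀ j ∈ B, P ((A j)ᶜ) ≤ ENNReal.ofReal (d j (mj j)) := by
    intro j hj
    have hspec := (h j hj).choose_spec
    have hsub : (A j)ᶜ ⊆ {ω | ⟪N j (mj j), X ω⟫ < c j (mj j)} := by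
      intro ω hω
      simp only [hA, Set.compl_iUnion, Set.mem_iInter, Set.mem_compl_iff, Set.mem_setOf_eq,
        not_le] at hω
      exact hω (mj j)
    calc P ((A j)ᶜ) ≤ P {ω | ⟪N j (mj j), X ω⟫ < c j (mj j)} := measure_mono hsub
      _ = (P.map X) {x : EuclideanSpace ℝ (Fin n) | ⟪N j (mj j), x⟫ < c j (mj j)} := by
          rw [Measure.map_apply hX]
          · rfl
          · have hcont : Continuous fun x : EuclideanSpace ℝ (Fin n) => ⟪N j (mj j), x⟫ :=
              Continuous.inner continuous_const continuous_id
            exact measurableSet_lt hcont.measurable measurable_const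
      _ = mvGaussian xhat S {x : EuclideanSpace ℝ (Fin n) | ⟪N j (mj j), x⟫ < c j (mj j)} := by
          rw [hlaw]
      _ ≤ ENNReal.ofReal (d j (mj j)) := by
          apply mvGaussian_halfspace_le xhat hS _ (hN j (mj j))
          have : mj j = (h j hj).choose := by rw [hmj]; simp [hj]
          rw [this]
          exact hspec
  -- union bound
  have hcompl : P ((⋂ j ∈ B, A j)ᶜ) ≤ ENNReal.ofReal δ := by
    rw [Set.compl_iInter₂]
    calc P (⋃ j ∈ B, (A j)ᶜ) ≤ ∑ j ∈ B, P ((A j)ᶜ) := measure_biUnion_finset_le B _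
      _ ≤ ∑ j ∈ B, ENNReal.ofReal (d j (mj j)) := Finset.sum_le_sum hbound
      _ = ENNReal.ofReal (∑ j ∈ B, d j (mj j)) := by
          rw [ENNReal.ofReal_sum_of_nonneg fun j _ => (hd j (mj j)).1.le]
      _ ≤ ENNReal.ofReal δ := by
          apply ENNReal.ofReal_le_ofReal
          refine le_trans (Finset.sum_le_sum fun j _ => ?_) hsum
          exact Finset.single_le_sum (fun m _ => (hd j m).1.le) (Finset.mem_univ (mj j))
  have htotal : P (⋂ j ∈ B, A j) + P ((⋂ j ∈ B, A j)ᶜ) = 1 :=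
    by rw [measure_add_measure_compl hImeas, measure_univ]
  have h1 : 1 - ENNReal.ofReal δ ≤ P (⋂ j ∈ B, A j) := by
    rw [tsub_le_iff_right, ← htotal]
    exact add_le_add le_rfl hcompl
  calc ENNReal.ofReal (1 - δ) = ENNReal.ofReal 1 - ENNReal.ofReal δ := ENNReal.ofReal_sub 1 hδ0
    _ = 1 - ENNReal.ofReal δ := by rw [ENNReal.ofReal_one]
    _ ≤ P (⋂ j ∈ B, A j) := h1
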